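/- Let ω be a Poisson point process on ℝ³ with Lebesgue intensity. Fix δ > 0, r > 0, and set ε_n = 2^{−3n}, R_n = δ 2^{2n}. For z ranging over the lattice points 2rℤ³ ∩ B(0, R_n − r), the counts ω(B(2^{−n}z, 2^{−n}δ)) are i.i.d. Poisson with mean (4/3)π(2^{−n}δ)³. Then almost surely, limsup_{n→∞} max_{z ∈ 2rℤ³ ∩ B(0, δ2^{2n} − r)} ω(B(2^{−n}z, 2^{−n}δ)) = 2. -/

import Mathlib

open MeasureTheory ProbabilityTheory Filter
open scoped ENNReal

/-- The maximal Poisson count over the lattice points `z ∈ 2rℤ³ ∩ B(0, δ2^{2n} - r)`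
of the number of points in the ball `B(2^{-n} z, 2^{-n} δ)`. -/
noncomputable def maxLatticeCount {Ω : Type*}
    (N : Ω → Set (EuclideanSpace ℝ (Fin 3)) → ℕ) (r δ : ℝ) (n : ℕ) (ω : Ω) : ℕ :=
  sSup {k : ℕ | ∃ m : Fin 3 → ℤ,
    ‖((EuclideanSpace.equiv (Fin 3) ℝ).symm (fun i => 2 * r * (m i : ℝ)))‖
        < δ * 2 ^ (2 * n) - r ∧
    k = N ω (Metric.ball
      ((2 : ℝ) ^ (-(n : ℤ)) •
        ((EuclideanSpace.equiv (Fin 3) ℝ).symm (fun i => 2 * r * (m i : ℝ))))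
      ((2 : ℝ) ^ (-(n : ℤ)) * δ))}

set_option linter.unusedSectionVars false
set_option linter.unusedVariables false

open Metric

namespace PoissonAux

noncomputable def vec (r : ℝ) (m : Fin 3 → ℤ) : EuclideanSpace ℝ (Fin 3) :=
  (EuclideanSpace.equiv (Fin 3) ℝ).symm (fun i => 2 * r * (m i : ℝ))
lemma vec_apply (r : ℝ) (m : Fin 3 → ℤ) (i : Fin 3) : vec r m i = 2 * r * (m i : ℝ) := rfl
lemma norm_vec_sq (r : ℝ) (m : Fin 3 → ℤ) :
    ‖vec r m‖ ^ 2 = ∑ i, (2 * r * (m i : ℝ)) ^ 2 := by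
  rw [EuclideanSpace.norm_eq, Real.sq_sqrt (by positivity)]
  congr 1; ext i
  rw [vec_apply, Real.norm_eq_abs, sq_abs]
lemma coord_le_norm (r : ℝ) (m : Fin 3 → ℤ) (i : Fin 3) :
    |2 * r * (m i : ℝ)| ≤ ‖vec r m‖ := by
  have h1 : (2 * r * (m i : ℝ)) ^ 2 ≤ ‖vec r m‖ ^ 2 := by
    rw [norm_vec_sq]
    exact Finset.single_le_sum (f := fun i => (2 * r * (m i : ℝ)) ^ 2)
      (fun j _ => by positivity) (Finset.mem_univ i)
  have h2 := norm_nonneg (vec r m)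
  rw [abs_le]; constructor <;> nlinarith
lemma vec_sub (r : ℝ) (m m' : Fin 3 → ℤ) : vec r (m - m') = vec r m - vec r m' := by
  ext i; simp [vec_apply]; ring
lemma norm_le_of_sq_le {v : EuclideanSpace ℝ (Fin 3)} {R : ℝ} (hR : 0 ≤ R)
    (h : ‖v‖ ^ 2 ≤ R ^ 2) : ‖v‖ ≤ R := by nlinarith [norm_nonneg v]
lemma le_norm_of_sq_le {v : EuclideanSpace ℝ (Fin 3)} {A : ℝ}
    (h : A ^ 2 ≤ ‖v‖ ^ 2) : A ≤ ‖v‖ := by nlinarith [norm_nonneg v]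
noncomputable def ctr (r : ℝ) (n : ℕ) (m : Fin 3 → ℤ) : EuclideanSpace ℝ (Fin 3) :=
  (2 : ℝ) ^ (-(n : ℤ)) • vec r m

section Lower
variable {δ r : ℝ} (hδ : 0 < δ) (hr : 0 < r)

noncomputable def sp (δ r : ℝ) : ℕ := Nat.ceil (δ / r) + 1

noncomputable def TT (δ r : ℝ) : ℝ := 2 * r * (sp δ r)

noncomputable def WW (δ r : ℝ) (n : ℕ) : ℕ := Nat.ceil (δ * 2 ^ (2 * n) / (18 * TT δ r))

noncomputable def Box (δ r : ℝ) (n : ℕ) : Finset (Fin 3 → ℤ) :=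
  Fintype.piFinset fun _ => Finset.Icc (9 * (WW δ r n) : ℤ) (10 * (WW δ r n))

noncomputable def mOf (δ r : ℝ) (a : Fin 3 → ℤ) : Fin 3 → ℤ := fun i => (sp δ r : ℤ) * a i

include hδ hr

lemma sp_gt : δ < r * (sp δ r) := by
  have h1 : δ / r ≤ (Nat.ceil (δ / r) : ℝ) := Nat.le_ceil _
  have h3 : (sp δ r : ℝ) = (Nat.ceil (δ / r) : ℝ) + 1 := by unfold sp; push_cast; ring
  have := (div_le_iff₀ hr).mp h1
  nlinarith

lemma TT_pos : 0 < TT δ r := by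
  have : (1:ℝ) ≤ (sp δ r : ℝ) := by
    unfold sp; push_cast
    have := Nat.cast_nonneg (α := ℝ) (Nat.ceil (δ / r))
    linarith
  simp only [TT]; nlinarith

lemma TT_gt : 2 * δ < TT δ r := by
  have := sp_gt hδ hr
  simp only [TT]; nlinarith

lemma WW_lb (n : ℕ) : δ * 2 ^ (2 * n) / (18 * TT δ r) ≤ (WW δ r n : ℝ) := Nat.le_ceil _

lemma WW_ub (n : ℕ) : (WW δ r n : ℝ) < δ * 2 ^ (2 * n) / (18 * TT δ r) + 1 :=
  Nat.ceil_lt_add_one (by have := TT_pos hδ hr; positivity)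

lemma WW_pos (n : ℕ) : 0 < (WW δ r n : ℝ) := by
  have h := WW_lb hδ hr (δ := δ) (r := r) n
  have hT := TT_pos hδ hr
  have : (0:ℝ) < δ * 2 ^ (2 * n) / (18 * TT δ r) := by positivity
  linarith

lemma card_Box (n : ℕ) : (Box δ r n).card = (WW δ r n + 1) ^ 3 := by
  rw [Box, Fintype.card_piFinset]
  simp only [Int.card_Icc]
  rw [Finset.prod_const, Finset.card_univ, Fintype.card_fin]
  congr 1
  omega

lemma coord_mOf (a : Fin 3 → ℤ) (i : Fin 3) :
    (vec r (mOf δ r a)) i = TT δ r * (a i : ℝ) := by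
  rw [vec_apply, mOf, TT]; push_cast; ring

-- norm bounds for a ∈ Box
lemma norm_mOf_bounds {n : ℕ} {a : Fin 3 → ℤ} (ha : a ∈ Box δ r n) :
    15 * (WW δ r n : ℝ) * TT δ r ≤ ‖vec r (mOf δ r a)‖ ∧
    ‖vec r (mOf δ r a)‖ ≤ 17.4 * (WW δ r n : ℝ) * TT δ r := by
  have hT := TT_pos hδ hr
  have hW := WW_pos hδ hr (δ := δ) (r := r) n
  rw [Box, Fintype.mem_piFinset] at ha
  have hco : ∀ i, 9 * (WW δ r n : ℝ) ≤ (a i : ℝ) ∧ (a i : ℝ) ≤ 10 * (WW δ r n : ℝ) := by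
    intro i
    have := ha i
    rw [Finset.mem_Icc] at this
    exact ⟨by exact_mod_cast this.1, by exact_mod_cast this.2⟩
  have hsq : ‖vec r (mOf δ r a)‖ ^ 2 = ∑ i, (TT δ r * (a i : ℝ)) ^ 2 := by
    rw [norm_vec_sq]
    congr 1; ext i
    rw [← coord_mOf hδ hr, vec_apply]
  constructor
  · apply le_norm_of_sq_le
    rw [hsq]
    have hterm : ∀ i ∈ Finset.univ, (9 * (WW δ r n : ℝ) * TT δ r) ^ 2 ≤ (TT δ r * (a i : ℝ)) ^ 2 := by
      intro i _
      have h1 := (hco i).1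
      have hle : 9 * (WW δ r n : ℝ) * TT δ r ≤ TT δ r * (a i : ℝ) := by nlinarith
      exact pow_le_pow_left₀ (by nlinarith) hle 2
    have hsum := Finset.sum_le_sum hterm
    rw [Finset.sum_const, Finset.card_univ, Fintype.card_fin, nsmul_eq_mul] at hsum
    push_cast at hsum
    nlinarith [sq_nonneg ((WW δ r n : ℝ) * TT δ r)]
  · apply norm_le_of_sq_le (by nlinarith)
    rw [hsq]
    have hterm : ∀ i ∈ Finset.univ, (TT δ r * (a i : ℝ)) ^ 2 ≤ (10 * (WW δ r n : ℝ) * TT δ r) ^ 2 := by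
      intro i _
      have h1 := (hco i).1
      have h2 := (hco i).2
      have hle : TT δ r * (a i : ℝ) ≤ 10 * (WW δ r n : ℝ) * TT δ r := by nlinarith
      exact pow_le_pow_left₀ (by nlinarith) hle 2
    have hsum := Finset.sum_le_sum hterm
    rw [Finset.sum_const, Finset.card_univ, Fintype.card_fin, nsmul_eq_mul] at hsum
    push_cast at hsum
    nlinarith [sq_nonneg ((WW δ r n : ℝ) * TT δ r)]

-- scale-n conditions
def Cond (δ r : ℝ) (n : ℕ) : Prop :=
  30 * (17.4 * TT δ r + r) ≤ δ * 2 ^ (2 * n) ∧ (3:ℝ) < 2 ^ (2 * n) ∧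
    17.4 * TT δ r + δ ≤ δ * 2 ^ (2 * n)

-- validity (membership in the sSup set domain)
lemma valid_of_Box {n : ℕ} (hc : Cond δ r n) {a : Fin 3 → ℤ} (ha : a ∈ Box δ r n) :
    ‖vec r (mOf δ r a)‖ < δ * 2 ^ (2 * n) - r := by
  have hT := TT_pos hδ hr
  have h2 := (norm_mOf_bounds hδ hr ha).2
  have hWu := WW_ub hδ hr (δ := δ) (r := r) n
  have hWT : (WW δ r n : ℝ) * TT δ r < δ * 2 ^ (2 * n) / 18 + TT δ r := by
    have h18 : (0:ℝ) < 18 * TT δ r := by linarith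
    calc (WW δ r n : ℝ) * TT δ r < (δ * 2 ^ (2 * n) / (18 * TT δ r) + 1) * TT δ r := by
          nlinarith
      _ = δ * 2 ^ (2 * n) / 18 + TT δ r := by field_simp
  have hc1 := hc.1
  nlinarith

omit hδ hr in
lemma dist_ctr (n : ℕ) (m m' : Fin 3 → ℤ) :
    dist (ctr r n m) (ctr r n m') = ((2:ℝ) ^ n)⁻¹ * ‖vec r (m - m')‖ := by
  rw [ctr, ctr, dist_eq_norm, ← smul_sub, norm_smul, vec_sub]
  congr 1
  rw [Real.norm_eq_abs, abs_of_pos (by positivity), zpow_neg, zpow_natCast]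

omit hδ hr in
lemma norm_ctr (n : ℕ) (m : Fin 3 → ℤ) :
    ‖ctr r n m‖ = ((2:ℝ) ^ n)⁻¹ * ‖vec r m‖ := by
  rw [ctr, norm_smul, Real.norm_eq_abs, abs_of_pos (by positivity), zpow_neg, zpow_natCast]

-- same-scale disjointness
lemma disjoint_same_scale {n : ℕ} {a b : Fin 3 → ℤ} (hab : a ≠ b) :
    Disjoint (Metric.ball (ctr r n (mOf δ r a)) ((2:ℝ) ^ (-(n:ℤ)) * δ))
      (Metric.ball (ctr r n (mOf δ r b)) ((2:ℝ) ^ (-(n:ℤ)) * δ)) := by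
  apply Metric.ball_disjoint_ball
  rw [dist_ctr]
  have hpn : (0:ℝ) < 2 ^ n := by positivity
  have hzpow : (2:ℝ) ^ (-(n:ℤ)) = ((2:ℝ) ^ n)⁻¹ := by rw [zpow_neg, zpow_natCast]
  rw [hzpow]
  have hTgt := TT_gt hδ hr
  have hTnorm : TT δ r ≤ ‖vec r (mOf δ r a - mOf δ r b)‖ := by
    obtain ⟨i, hi⟩ := Function.ne_iff.mp hab
    have hco := coord_le_norm r (mOf δ r a - mOf δ r b) i
    have hval : ((mOf δ r a - mOf δ r b) i : ℝ) = (sp δ r : ℝ) * ((a i : ℝ) - (b i : ℝ)) := by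
      simp [mOf]; push_cast; ring
    have habs : (1:ℝ) ≤ |(a i : ℝ) - (b i : ℝ)| := by
      have : a i - b i ≠ 0 := sub_ne_zero.mpr hi
      have h1 : (1:ℤ) ≤ |a i - b i| := Int.one_le_abs this
      calc (1:ℝ) ≤ ((|a i - b i| : ℤ) : ℝ) := by exact_mod_cast h1
        _ = |(a i : ℝ) - (b i : ℝ)| := by push_cast [Int.cast_abs]; ring_nf
    have hsp : (1:ℝ) ≤ (sp δ r : ℝ) := by
      unfold sp; push_cast
      have := Nat.cast_nonneg (α := ℝ) (Nat.ceil (δ / r))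
      linarith
    calc TT δ r = |2 * r * (sp δ r : ℝ)| * 1 := by
          rw [abs_of_pos (by nlinarith), TT, mul_one]
      _ ≤ |2 * r * (sp δ r : ℝ)| * |(a i : ℝ) - (b i : ℝ)| := by
          apply mul_le_mul_of_nonneg_left habs (abs_nonneg _)
      _ = |2 * r * (((mOf δ r a - mOf δ r b) i : ℤ) : ℝ)| := by
          rw [← abs_mul, hval]; ring_nf
      _ ≤ ‖vec r (mOf δ r a - mOf δ r b)‖ := hco
  have h2 : ((2:ℝ) ^ n)⁻¹ * TT δ r ≤ ((2:ℝ) ^ n)⁻¹ * ‖vec r (mOf δ r a - mOf δ r b)‖ := by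
    apply mul_le_mul_of_nonneg_left hTnorm (by positivity)
  have hinv : (0:ℝ) < ((2:ℝ) ^ n)⁻¹ := by positivity
  nlinarith

-- annulus containment
set_option maxHeartbeats 1000000 in
lemma ball_in_annulus {n : ℕ} (hc : Cond δ r n) {a : Fin 3 → ℤ} (ha : a ∈ Box δ r n)
    {x : EuclideanSpace ℝ (Fin 3)}
    (hx : x ∈ Metric.ball (ctr r n (mOf δ r a)) ((2:ℝ) ^ (-(n:ℤ)) * δ)) :
    (1/2) * δ * 2 ^ n < ‖x‖ ∧ ‖x‖ < 2 * δ * 2 ^ n := by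
  have hT := TT_pos hδ hr
  have hW := WW_pos hδ hr (δ := δ) (r := r) n
  have hpn : (0:ℝ) < 2 ^ n := by positivity
  have hzpow : (2:ℝ) ^ (-(n:ℤ)) = ((2:ℝ) ^ n)⁻¹ := by rw [zpow_neg, zpow_natCast]
  have hQ : (2:ℝ) ^ (2 * n) = ((2:ℝ) ^ n) ^ 2 := by rw [← pow_mul, mul_comm]
  rw [Metric.mem_ball, hzpow] at hx
  have hnc := norm_ctr (r := r) n (mOf δ r a)
  have hbounds := norm_mOf_bounds hδ hr ha
  have htri := abs_norm_sub_norm_le x (ctr r n (mOf δ r a))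
  rw [← dist_eq_norm] at htri
  rw [abs_le] at htri
  have hWl := WW_lb hδ hr (δ := δ) (r := r) n
  have hWu := WW_ub hδ hr (δ := δ) (r := r) n
  have hinv : (0:ℝ) < ((2:ℝ) ^ n)⁻¹ := by positivity
  have hpninv : ((2:ℝ) ^ n)⁻¹ * (2:ℝ) ^ n = 1 := inv_mul_cancel₀ hpn.ne'
  have hWTl : δ * 2 ^ (2*n) / 18 ≤ (WW δ r n : ℝ) * TT δ r := by
    rw [div_le_iff₀ (by norm_num : (0:ℝ) < 18)]
    have := mul_le_mul_of_nonneg_right hWl hT.le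
    calc δ * 2 ^ (2*n) = δ * 2 ^ (2 * n) / (18 * TT δ r) * TT δ r * 18 := by
          field_simp
      _ ≤ (WW δ r n : ℝ) * TT δ r * 18 := by nlinarith
  have hWTu : (WW δ r n : ℝ) * TT δ r < δ * 2 ^ (2*n) / 18 + TT δ r := by
    have h18 : (0:ℝ) < 18 * TT δ r := by linarith
    calc (WW δ r n : ℝ) * TT δ r < (δ * 2 ^ (2 * n) / (18 * TT δ r) + 1) * TT δ r := by
          nlinarith
      _ = δ * 2 ^ (2 * n) / 18 + TT δ r := by field_simp
  -- norm of center bounds, scaled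
  have hcl : ((2:ℝ)^n)⁻¹ * (15 * ((WW δ r n : ℝ) * TT δ r)) ≤ ‖ctr r n (mOf δ r a)‖ := by
    rw [hnc]
    apply mul_le_mul_of_nonneg_left _ hinv.le
    nlinarith [hbounds.1]
  have hcu : ‖ctr r n (mOf δ r a)‖ ≤ ((2:ℝ)^n)⁻¹ * (17.4 * ((WW δ r n : ℝ) * TT δ r)) := by
    rw [hnc]
    apply mul_le_mul_of_nonneg_left _ hinv.le
    nlinarith [hbounds.2]
  obtain ⟨hc1, hc2, hc3⟩ := hc
  constructor
  · -- lower bound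
    have key : ((2:ℝ)^n)⁻¹ * (15 * (δ * 2 ^ (2*n) / 18))
        ≤ ‖ctr r n (mOf δ r a)‖ := by
      refine le_trans ?_ hcl
      apply mul_le_mul_of_nonneg_left _ hinv.le
      linarith [hWTl]
    have hval : ((2:ℝ)^n)⁻¹ * (15 * (δ * 2 ^ (2*n) / 18)) = (15/18) * (δ * 2 ^ n) := by
      rw [hQ]; field_simp
    rw [hval] at key
    have h3 : 3 * ((2:ℝ)^n)⁻¹ < 2 ^ n := by
      rw [hQ] at hc2
      have hmul := mul_lt_mul_of_pos_left hc2 hinv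
      have heq : ((2:ℝ)^n)⁻¹ * ((2:ℝ)^n)^2 = 2^n := by field_simp
      rw [heq] at hmul
      linarith
    have h4 := mul_lt_mul_of_pos_left h3 hδ
    have hx1 := htri.1
    have hx2 : dist x (ctr r n (mOf δ r a)) < (2 ^ n)⁻¹ * δ := hx
    linarith [hx1, hx2, key, h4]
  · -- upper bound
    have key : ‖ctr r n (mOf δ r a)‖
        ≤ ((2:ℝ)^n)⁻¹ * (17.4 * (δ * 2 ^ (2*n) / 18 + TT δ r)) := by
      refine hcu.trans ?_
      apply mul_le_mul_of_nonneg_left _ hinv.le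
      linarith [hWTu]
    have hval : ((2:ℝ)^n)⁻¹ * (17.4 * (δ * 2 ^ (2*n) / 18 + TT δ r))
        = (17.4/18) * (δ * 2 ^ n) + ((2:ℝ)^n)⁻¹ * (17.4 * TT δ r) := by
      rw [hQ]; field_simp
    rw [hval] at key
    have hTb : ((2:ℝ)^n)⁻¹ * (17.4 * TT δ r) + ((2:ℝ)^n)⁻¹ * δ ≤ δ * 2 ^ n := by
      have step : ((2:ℝ)^n)⁻¹ * (17.4 * TT δ r + δ) ≤ ((2:ℝ)^n)⁻¹ * (δ * 2 ^ (2*n)) :=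
        mul_le_mul_of_nonneg_left hc3 hinv.le
      have heq : ((2:ℝ)^n)⁻¹ * (δ * 2 ^ (2*n)) = δ * 2 ^ n := by
        rw [hQ]; field_simp
      rw [heq] at step
      linarith [step]
    have hpos : (0:ℝ) < δ * 2 ^ n := by positivity
    have hx2 : dist x (ctr r n (mOf δ r a)) < (2 ^ n)⁻¹ * δ := hx
    linarith [htri.2, hx2, key, hTb, hpos]

-- cross-scale disjointness
lemma disjoint_cross_scale {n n' : ℕ} (hc : Cond δ r n) (hc' : Cond δ r n')
    (hnn : n + 2 ≤ n') {a b : Fin 3 → ℤ} (ha : a ∈ Box δ r n) (hb : b ∈ Box δ r n') :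
    Disjoint (Metric.ball (ctr r n (mOf δ r a)) ((2:ℝ) ^ (-(n:ℤ)) * δ))
      (Metric.ball (ctr r n' (mOf δ r b)) ((2:ℝ) ^ (-(n':ℤ)) * δ)) := by
  rw [Set.disjoint_left]
  intro x hx hx'
  have h1 := (ball_in_annulus hδ hr hc ha hx).2
  have h2 := (ball_in_annulus hδ hr hc' hb hx').1
  have hmono : (2:ℝ) ^ (n + 2) ≤ 2 ^ n' := by
    apply pow_le_pow_right₀ (by norm_num) hnn
  have hp2 : (2:ℝ) ^ (n + 2) = 4 * 2 ^ n := by rw [pow_add]; ring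
  have hpn : (0:ℝ) < 2 ^ n := by positivity
  nlinarith

end Lower

section Prob
variable {Ω : Type*} [MeasurableSpace Ω] (P : Measure Ω) [IsProbabilityMeasure P]
    (N : Ω → Set (EuclideanSpace ℝ (Fin 3)) → ℕ)

lemma tsum_poisson (lam : ℝ) (hl : 0 ≤ lam) :
    ∑' k : ℕ, ENNReal.ofReal (Real.exp (-lam) * lam ^ k / (Nat.factorial k)) = 1 := by
  have hsum : Summable (fun k : ℕ => Real.exp (-lam) * lam ^ k / (Nat.factorial k)) := by
    simpa [mul_div_assoc] using (Real.summable_pow_div_factorial lam).mul_left (Real.exp (-lam))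
  rw [← ENNReal.ofReal_tsum_of_nonneg (fun k => by positivity) hsum]
  have h1 : ∑' k : ℕ, Real.exp (-lam) * lam ^ k / (Nat.factorial k)
      = Real.exp (-lam) * ∑' k : ℕ, lam ^ k / (Nat.factorial k) := by
    rw [← tsum_mul_left]; simp [mul_div_assoc]
  have hexp : ∑' k : ℕ, lam ^ k / (Nat.factorial k) = Real.exp lam := by
    rw [Real.exp_eq_exp_ℝ, NormedSpace.exp_eq_tsum_div]
  rw [h1, hexp, ← Real.exp_add]
  simp

variable (hmeas : ∀ A : Set (EuclideanSpace ℝ (Fin 3)), MeasurableSet A →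
      Measurable fun ω => N ω A)
    (hpoisson : ∀ A : Set (EuclideanSpace ℝ (Fin 3)), MeasurableSet A →
      volume A < ⊤ → ∀ k : ℕ,
      P {ω | N ω A = k} =
        ENNReal.ofReal (Real.exp (-(volume A).toReal) *
          (volume A).toReal ^ k / (Nat.factorial k)))

include hmeas hpoisson

lemma prob_ge_three {A : Set (EuclideanSpace ℝ (Fin 3))} (hA : MeasurableSet A)
    (hv : volume A < ⊤) :
    P {ω | 3 ≤ N ω A} ≤ ENNReal.ofReal ((volume A).toReal ^ 3 / 6) := by
  set lam := (volume A).toReal with hlam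
  have hl : 0 ≤ lam := ENNReal.toReal_nonneg
  have hset : {ω | 3 ≤ N ω A} = ⋃ j : ℕ, {ω | N ω A = j + 3} := by
    ext ω; simp only [Set.mem_setOf_eq, Set.mem_iUnion]
    constructor
    · intro h; exact ⟨N ω A - 3, by omega⟩
    · rintro ⟨j, hj⟩; omega
  have hdisj : Pairwise (Function.onFun Disjoint fun j : ℕ => {ω | N ω A = j + 3}) := by
    intro i j hij
    simp only [Function.onFun, Set.disjoint_left, Set.mem_setOf_eq]
    intro ω h1 h2; omega
  have hmeask : ∀ j : ℕ, MeasurableSet {ω | N ω A = j + 3} := fun j =>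
    (hmeas A hA) (measurableSet_singleton (j + 3))
  rw [hset, measure_iUnion hdisj hmeask]
  calc ∑' j : ℕ, P {ω | N ω A = j + 3}
      ≤ ∑' j : ℕ, ENNReal.ofReal ((lam ^ 3 / 6) *
          (Real.exp (-lam) * lam ^ j / (Nat.factorial j))) := by
        refine ENNReal.tsum_le_tsum fun j => ?_
        rw [hpoisson A hA hv (j + 3)]
        refine ENNReal.ofReal_le_ofReal ?_
        have hfacn : 6 * (Nat.factorial j) ≤ (Nat.factorial (j + 3)) := by
          have h3 : Nat.factorial (j + 3) = (j + 3) * ((j + 2) * ((j + 1) * Nat.factorial j)) := by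
            simp [Nat.factorial_succ]
          rw [h3]
          have h6 : 6 ≤ (j + 3) * ((j + 2) * (j + 1)) := by
            have : 3 * (2 * 1) ≤ (j + 3) * ((j + 2) * (j + 1)) :=
              Nat.mul_le_mul (by omega) (Nat.mul_le_mul (by omega) (by omega))
            omega
          calc 6 * Nat.factorial j ≤ ((j + 3) * ((j + 2) * (j + 1))) * Nat.factorial j :=
                Nat.mul_le_mul_right _ h6
            _ = (j + 3) * ((j + 2) * ((j + 1) * Nat.factorial j)) := by ring
        have hfac : (6 : ℝ) * (Nat.factorial j) ≤ (Nat.factorial (j + 3)) := by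
          exact_mod_cast hfacn
        have hfj : (0 : ℝ) < Nat.factorial j := by positivity
        have key : Real.exp (-lam) * lam ^ (j + 3) / (Nat.factorial (j + 3))
            ≤ Real.exp (-lam) * lam ^ (j + 3) / (6 * Nat.factorial j) := by
          apply div_le_div_of_nonneg_left (by positivity) (by positivity) hfac
        refine key.trans (le_of_eq ?_)
        have : lam ^ (j + 3) = lam ^ 3 * lam ^ j := by ring
        rw [this]
        field_simp
      _ = ENNReal.ofReal (lam ^ 3 / 6) := by
        have : ∀ j : ℕ, ENNReal.ofReal ((lam ^ 3 / 6) *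
            (Real.exp (-lam) * lam ^ j / (Nat.factorial j)))
            = ENNReal.ofReal (lam ^ 3 / 6) *
              ENNReal.ofReal (Real.exp (-lam) * lam ^ j / (Nat.factorial j)) := fun j =>
          ENNReal.ofReal_mul (by positivity)
        simp only [this]
        rw [ENNReal.tsum_mul_left, tsum_poisson lam hl, mul_one]

lemma prob_ne_two_le {A : Set (EuclideanSpace ℝ (Fin 3))} (hA : MeasurableSet A)
    (hv : volume A < ⊤) (hle : (volume A).toReal ≤ 1) :
    P {ω | ¬ N ω A = 2} ≤ ENNReal.ofReal
      (Real.exp (-(Real.exp (-(volume A).toReal) * (volume A).toReal ^ 2 / 2))) := by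
  set lam := (volume A).toReal with hlam
  have hl : 0 ≤ lam := ENNReal.toReal_nonneg
  set p : ℝ := Real.exp (-lam) * lam ^ 2 / 2 with hp
  have hp0 : 0 ≤ p := by positivity
  have hp1 : p ≤ 1 := by
    have h1 : Real.exp (-lam) ≤ 1 := Real.exp_le_one_iff.2 (by linarith)
    have h2 : lam ^ 2 ≤ 1 := by nlinarith
    nlinarith [Real.exp_pos (-lam)]
  have hcompl : {ω : Ω | ¬ N ω A = 2} = {ω : Ω | N ω A = 2}ᶜ := rfl
  have hm2 : MeasurableSet {ω : Ω | N ω A = 2} := (hmeas A hA) (measurableSet_singleton 2)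
  rw [hcompl, measure_compl hm2 (measure_ne_top P _), measure_univ,
    hpoisson A hA hv 2]
  have hval : Real.exp (-lam) * lam ^ 2 / (Nat.factorial 2) = p := by
    norm_num [hp]
  rw [hval]
  have h1 : (1 : ℝ≥0∞) - ENNReal.ofReal p = ENNReal.ofReal (1 - p) := by
    rw [← ENNReal.ofReal_one, ← ENNReal.ofReal_sub _ hp0]
  rw [h1]
  refine ENNReal.ofReal_le_ofReal ?_
  have := Real.add_one_le_exp (-p)
  linarith

end Prob

lemma maxLatticeCount_eq {Ω : Type*} (N : Ω → Set (EuclideanSpace ℝ (Fin 3)) → ℕ)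
    (r δ : ℝ) (n : ℕ) (ω : Ω) :
    maxLatticeCount N r δ n ω = sSup {k : ℕ | ∃ m : Fin 3 → ℤ,
      ‖vec r m‖ < δ * 2 ^ (2 * n) - r ∧
      k = N ω (Metric.ball (ctr r n m) ((2 : ℝ) ^ (-(n : ℤ)) * δ))} := rfl

noncomputable def bigBox (δ r : ℝ) (n : ℕ) : Finset (Fin 3 → ℤ) :=
  Fintype.piFinset fun _ => Finset.Icc (-(Nat.ceil (δ * 2 ^ (2 * n) / (2 * r)) : ℤ))
    (Nat.ceil (δ * 2 ^ (2 * n) / (2 * r)) : ℤ)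

lemma mem_bigBox_of_valid {δ r : ℝ} (hr : 0 < r) {n : ℕ} {m : Fin 3 → ℤ}
    (h : ‖vec r m‖ < δ * 2 ^ (2 * n) - r) : m ∈ bigBox δ r n := by
  rw [bigBox, Fintype.mem_piFinset]
  intro i
  set B : ℕ := Nat.ceil (δ * 2 ^ (2 * n) / (2 * r)) with hB
  have h1 : |2 * r * (m i : ℝ)| ≤ ‖vec r m‖ := coord_le_norm r m i
  have h2 : |2 * r * (m i : ℝ)| < δ * 2 ^ (2 * n) := by
    refine lt_of_le_of_lt h1 (h.trans_le ?_); linarith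
  have h3 : |(m i : ℝ)| ≤ (B : ℝ) := by
    have hb : δ * 2 ^ (2 * n) / (2 * r) ≤ (B : ℝ) := Nat.le_ceil _
    have : |(m i : ℝ)| < δ * 2 ^ (2 * n) / (2 * r) := by
      rw [lt_div_iff₀ (by linarith)]
      calc |(m i : ℝ)| * (2 * r) = |2 * r * (m i : ℝ)| := by
            rw [abs_mul, abs_of_pos (by linarith : (0:ℝ) < 2 * r)]; ring
        _ < δ * 2 ^ (2 * n) := h2
    linarith
  rw [Finset.mem_Icc]
  have : |m i| ≤ (B : ℤ) := by exact_mod_cast (by simpa [Int.cast_abs] using h3 : (|m i| : ℝ) ≤ B)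
  exact abs_le.mp this

lemma card_bigBox (δ r : ℝ) (n : ℕ) :
    (bigBox δ r n).card = (2 * Nat.ceil (δ * 2 ^ (2 * n) / (2 * r)) + 1) ^ 3 := by
  rw [bigBox, Fintype.card_piFinset]
  simp only [Int.card_Icc]
  rw [Finset.prod_const, Finset.card_univ, Fintype.card_fin]
  congr 1
  omega


lemma sSup_le_two {Ω : Type*} {N : Ω → Set (EuclideanSpace ℝ (Fin 3)) → ℕ}
    {r δ : ℝ} {n : ℕ} {ω : Ω}
    (h : ∀ m : Fin 3 → ℤ, ‖vec r m‖ < δ * 2 ^ (2 * n) - r →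
      N ω (Metric.ball (ctr r n m) ((2 : ℝ) ^ (-(n : ℤ)) * δ)) ≤ 2) :
    maxLatticeCount N r δ n ω ≤ 2 := by
  rw [maxLatticeCount_eq]
  refine csSup_le' ?_
  rintro k ⟨m, hm, rfl⟩
  exact h m hm

lemma two_le_sSup {Ω : Type*} {N : Ω → Set (EuclideanSpace ℝ (Fin 3)) → ℕ}
    {r δ : ℝ} (hr : 0 < r) {n : ℕ} {ω : Ω} {m : Fin 3 → ℤ}
    (hm : ‖vec r m‖ < δ * 2 ^ (2 * n) - r)
    (h2 : N ω (Metric.ball (ctr r n m) ((2 : ℝ) ^ (-(n : ℤ)) * δ)) = 2) :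
    2 ≤ maxLatticeCount N r δ n ω := by
  rw [maxLatticeCount_eq]
  have hbdd : BddAbove {k : ℕ | ∃ m : Fin 3 → ℤ,
      ‖vec r m‖ < δ * 2 ^ (2 * n) - r ∧
      k = N ω (Metric.ball (ctr r n m) ((2 : ℝ) ^ (-(n : ℤ)) * δ))} := by
    refine (Set.Finite.subset ((bigBox δ r n).image
      (fun m => N ω (Metric.ball (ctr r n m) ((2 : ℝ) ^ (-(n : ℤ)) * δ)))).finite_toSet ?_).bddAbove
    rintro k ⟨m', hm', rfl⟩
    simp only [Finset.coe_image, Set.mem_image, Finset.mem_coe]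
    exact ⟨m', mem_bigBox_of_valid hr hm', rfl⟩
  exact le_csSup hbdd ⟨m, hm, h2.symm⟩

lemma vol_ball (x : EuclideanSpace ℝ (Fin 3)) {ρ : ℝ} (hρ : 0 ≤ ρ) :
    volume (Metric.ball x ρ)
      = ENNReal.ofReal (ρ ^ 3) * volume (Metric.ball (0 : EuclideanSpace ℝ (Fin 3)) 1) := by
  rw [Measure.addHaar_ball volume x hρ]
  congr 2
  simp

lemma lam_ball (x : EuclideanSpace ℝ (Fin 3)) {ρ : ℝ} (hρ : 0 ≤ ρ) :
    (volume (Metric.ball x ρ)).toReal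
      = ρ ^ 3 * (volume (Metric.ball (0 : EuclideanSpace ℝ (Fin 3)) 1)).toReal := by
  rw [vol_ball x hρ, ENNReal.toReal_mul, ENNReal.toReal_ofReal (by positivity)]


section Main
variable {Ω : Type*} [MeasurableSpace Ω] (P : Measure Ω) [IsProbabilityMeasure P]
    (N : Ω → Set (EuclideanSpace ℝ (Fin 3)) → ℕ)
    (hmeas : ∀ A : Set (EuclideanSpace ℝ (Fin 3)), MeasurableSet A →
      Measurable fun ω => N ω A)
    (hpoisson : ∀ A : Set (EuclideanSpace ℝ (Fin 3)), MeasurableSet A →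
      volume A < ⊤ → ∀ k : ℕ,
      P {ω | N ω A = k} =
        ENNReal.ofReal (Real.exp (-(volume A).toReal) *
          (volume A).toReal ^ k / (Nat.factorial k)))
    (δ r : ℝ) (hδ : 0 < δ) (hr : 0 < r)

-- assume from prob.lean:
variable (prob_ge_three : ∀ {A : Set (EuclideanSpace ℝ (Fin 3))}, MeasurableSet A →
    volume A < ⊤ → P {ω | 3 ≤ N ω A} ≤ ENNReal.ofReal ((volume A).toReal ^ 3 / 6))

include hδ hr prob_ge_three in
lemma upper_ae : ∀ᵐ ω ∂P, ∀ᶠ n in atTop,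
    ∀ m : Fin 3 → ℤ, m ∈ bigBox δ r n →
      N ω (Metric.ball (ctr r n m) ((2 : ℝ) ^ (-(n : ℤ)) * δ)) ≤ 2 := by
  classical
  set c₀ : ℝ := (volume (Metric.ball (0 : EuclideanSpace ℝ (Fin 3)) 1)).toReal with hc₀
  have hc₀pos : 0 < c₀ := by
    apply ENNReal.toReal_pos
    · exact (measure_ball_pos volume _ one_pos).ne'
    · exact measure_ball_lt_top.ne
  set ρ : ℕ → ℝ := fun n => (2 : ℝ) ^ (-(n : ℤ)) * δ with hρdef
  have hρpos : ∀ n, 0 < ρ n := fun n => by positivity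
  set Aset : ℕ → Set Ω := fun n =>
    ⋃ m ∈ bigBox δ r n, {ω | 3 ≤ N ω (Metric.ball (ctr r n m) (ρ n))} with hAdef
  have hvol : ∀ n (m : Fin 3 → ℤ), volume (Metric.ball (ctr r n m) (ρ n)) < ⊤ :=
    fun n m => measure_ball_lt_top
  have hlam : ∀ n (m : Fin 3 → ℤ),
      (volume (Metric.ball (ctr r n m) (ρ n))).toReal = (ρ n) ^ 3 * c₀ :=
    fun n m => lam_ball _ (hρpos n).le
  -- bound on each P (Aset n)
  set C2 : ℝ := (δ/r + 3) ^ 3 * (δ ^ 3 * c₀) ^ 3 / 6 with hC2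
  have hbound : ∀ n, P (Aset n) ≤ ENNReal.ofReal (C2 * ((1:ℝ)/8) ^ n) := by
    intro n
    have h1 : P (Aset n) ≤ ∑ m ∈ bigBox δ r n,
        P {ω | 3 ≤ N ω (Metric.ball (ctr r n m) (ρ n))} := measure_biUnion_finset_le _ _
    have h2 : ∀ m ∈ bigBox δ r n, P {ω | 3 ≤ N ω (Metric.ball (ctr r n m) (ρ n))}
        ≤ ENNReal.ofReal (((ρ n) ^ 3 * c₀) ^ 3 / 6) := by
      intro m _
      have := prob_ge_three (measurableSet_ball (x := ctr r n m) (ε := ρ n)) (hvol n m)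
      rwa [hlam n m] at this
    calc P (Aset n) ≤ ∑ m ∈ bigBox δ r n, P {ω | 3 ≤ N ω (Metric.ball (ctr r n m) (ρ n))} := h1
      _ ≤ ∑ _m ∈ bigBox δ r n, ENNReal.ofReal (((ρ n) ^ 3 * c₀) ^ 3 / 6) :=
          Finset.sum_le_sum h2
      _ = ((bigBox δ r n).card : ℝ≥0∞) * ENNReal.ofReal (((ρ n) ^ 3 * c₀) ^ 3 / 6) := by
          rw [Finset.sum_const, nsmul_eq_mul]
      _ ≤ ENNReal.ofReal (C2 * ((1:ℝ)/8) ^ n) := by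
          rw [← ENNReal.ofReal_natCast, ← ENNReal.ofReal_mul (by positivity)]
          refine ENNReal.ofReal_le_ofReal ?_
          have hpn : (0:ℝ) < 2 ^ n := by positivity
          have hρn : ρ n = ((2:ℝ) ^ n)⁻¹ * δ := by
            rw [hρdef]; norm_num [zpow_neg, zpow_natCast]
          have h2n : (2:ℝ) ^ (2 * n) = ((2:ℝ) ^ n) ^ 2 := by
            rw [← pow_mul, mul_comm]
          rw [card_bigBox]
          push_cast
          have hBle : 2 * (Nat.ceil (δ * 2 ^ (2 * n) / (2 * r)) : ℝ) + 1
              ≤ (δ/r + 3) * ((2:ℝ) ^ n) ^ 2 := by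
            have hceil : (Nat.ceil (δ * 2 ^ (2 * n) / (2 * r)) : ℝ)
                < δ * 2 ^ (2 * n) / (2 * r) + 1 :=
              Nat.ceil_lt_add_one (by positivity)
            have hone : (1:ℝ) ≤ ((2:ℝ) ^ n) ^ 2 := by
              have : (1:ℝ) ≤ 2 ^ n := one_le_pow₀ (by norm_num)
              nlinarith
            have hx : 2 * (δ * 2 ^ (2 * n) / (2 * r)) = δ/r * ((2:ℝ) ^ n) ^ 2 := by
              rw [h2n]; field_simp
            nlinarith [hceil, hone, hx]
          have h3 : (2 * (Nat.ceil (δ * 2 ^ (2 * n) / (2 * r)) : ℝ) + 1) ^ 3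
              ≤ ((δ/r + 3) * ((2:ℝ) ^ n) ^ 2) ^ 3 := by
            apply pow_le_pow_left₀ (by positivity) hBle
          have h8 : ((8:ℝ))^n = ((2:ℝ)^n)^3 := by
            rw [← pow_mul, mul_comm, pow_mul]; norm_num
          calc (2 * (Nat.ceil (δ * 2 ^ (2 * n) / (2 * r)) : ℝ) + 1) ^ 3
                * (((ρ n) ^ 3 * c₀) ^ 3 / 6)
              ≤ ((δ/r + 3) * ((2:ℝ) ^ n) ^ 2) ^ 3 * (((ρ n) ^ 3 * c₀) ^ 3 / 6) :=
                mul_le_mul_of_nonneg_right h3 (by positivity)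
            _ = C2 * ((1:ℝ)/8) ^ n := by
                rw [hρn, hC2, div_pow, one_pow, h8]
                field_simp
    done
  have hsum : (∑' n, P (Aset n)) ≠ ⊤ := by
    have h8 : ENNReal.ofReal ((1:ℝ)/8) < 1 := by
      rw [← ENNReal.ofReal_one]
      exact ENNReal.ofReal_lt_ofReal_iff_of_nonneg (by norm_num) |>.2 (by norm_num)
    have : (∑' n, P (Aset n)) ≤ ∑' n : ℕ, ENNReal.ofReal C2 * (ENNReal.ofReal ((1:ℝ)/8)) ^ n := by
      refine ENNReal.tsum_le_tsum fun n => (hbound n).trans (le_of_eq ?_)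
      rw [ENNReal.ofReal_mul (by positivity), ENNReal.ofReal_pow (by norm_num)]
    refine ne_top_of_le_ne_top ?_ this
    rw [ENNReal.tsum_mul_left, ENNReal.tsum_geometric]
    refine ENNReal.mul_ne_top ENNReal.ofReal_ne_top (ENNReal.inv_ne_top.2 ?_)
    rw [ne_eq, tsub_eq_zero_iff_le]
    exact fun h => absurd (h.trans_lt h8) (lt_irrefl _)
  filter_upwards [ae_eventually_notMem hsum] with ω hω
  filter_upwards [hω] with n hn
  intro m hm
  by_contra hcon
  refine hn (Set.mem_biUnion hm ?_)
  simp only [Set.mem_setOf_eq, hρdef]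
  omega
end Main

section LowerAE
variable {Ω : Type*} [MeasurableSpace Ω] (P : Measure Ω) [IsProbabilityMeasure P]
    (N : Ω → Set (EuclideanSpace ℝ (Fin 3)) → ℕ)
    (hmeas : ∀ A : Set (EuclideanSpace ℝ (Fin 3)), MeasurableSet A →
      Measurable fun ω => N ω A)
    (hpoisson : ∀ A : Set (EuclideanSpace ℝ (Fin 3)), MeasurableSet A →
      volume A < ⊤ → ∀ k : ℕ,
      P {ω | N ω A = k} =
        ENNReal.ofReal (Real.exp (-(volume A).toReal) *
          (volume A).toReal ^ k / (Nat.factorial k)))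
    (hindep : ∀ {ι : Type} [Fintype ι]
      (A : ι → Set (EuclideanSpace ℝ (Fin 3))),
      (∀ i, MeasurableSet (A i)) → Pairwise (Function.onFun Disjoint A) →
      iIndepFun (fun i ω => N ω (A i)) P)
    {δ r : ℝ} (hδ : 0 < δ) (hr : 0 < r)

include hmeas hpoisson hindep hδ hr in
set_option maxHeartbeats 2000000 in
lemma lower_ae : ∀ᵐ ω ∂P, ∀ J : ℕ, ∃ n, J ≤ n ∧ ∃ m : Fin 3 → ℤ,
    ‖vec r m‖ < δ * 2 ^ (2 * n) - r ∧
    N ω (Metric.ball (ctr r n m) ((2 : ℝ) ^ (-(n : ℤ)) * δ)) = 2 := by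
  classical
  set c₀ : ℝ := (volume (Metric.ball (0 : EuclideanSpace ℝ (Fin 3)) 1)).toReal with hc₀
  have hc₀pos : 0 < c₀ := by
    apply ENNReal.toReal_pos
    · exact (measure_ball_pos volume _ one_pos).ne'
    · exact measure_ball_lt_top.ne
  set ρ : ℕ → ℝ := fun n => (2 : ℝ) ^ (-(n : ℤ)) * δ with hρdef
  have hρpos : ∀ n, 0 < ρ n := fun n => by positivity
  have hρn : ∀ n, ρ n = ((2:ℝ) ^ n)⁻¹ * δ := fun n => by
    rw [hρdef]; norm_num [zpow_neg, zpow_natCast]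
  have hvol : ∀ n (m : Fin 3 → ℤ), volume (Metric.ball (ctr r n m) (ρ n)) < ⊤ :=
    fun n m => measure_ball_lt_top
  have hlam : ∀ n (m : Fin 3 → ℤ),
      (volume (Metric.ball (ctr r n m) (ρ n))).toReal = (ρ n) ^ 3 * c₀ :=
    fun n m => lam_ball _ (hρpos n).le
  have hT := TT_pos hδ hr
  -- eventual conditions
  have htend : Tendsto (fun n : ℕ => (2:ℝ) ^ (2*n)) atTop atTop := by
    have heq : (fun n : ℕ => (2:ℝ) ^ (2*n)) = fun n : ℕ => ((4:ℝ))^n := by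
      funext n; rw [pow_mul]; norm_num
    rw [heq]; exact tendsto_pow_atTop_atTop_of_one_lt (by norm_num)
  have hev : ∀ᶠ n in atTop, Cond δ r n ∧ ((ρ n)^3 * c₀ ≤ 1) := by
    have h1 := htend.eventually_ge_atTop (30*(17.4 * TT δ r + r)/δ)
    have h3 := htend.eventually_ge_atTop ((17.4 * TT δ r + δ)/δ)
    have h2 := htend.eventually_ge_atTop (4:ℝ)
    have h4 := htend.eventually_ge_atTop (δ^3 * c₀)
    filter_upwards [h1, h2, h3, h4] with n h1 h2 h3 h4
    have hpn : (0:ℝ) < 2^n := by positivity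
    have hone : (1:ℝ) ≤ 2^n := one_le_pow₀ (by norm_num)
    have hQ : (2:ℝ)^(2*n) = ((2:ℝ)^n)^2 := by rw [← pow_mul, mul_comm]
    refine ⟨⟨?_, by linarith, ?_⟩, ?_⟩
    · have := (div_le_iff₀ hδ).mp h1; nlinarith
    · have := (div_le_iff₀ hδ).mp h3; nlinarith
    · rw [hρn]
      have hinv : (0:ℝ) < ((2:ℝ)^n)⁻¹ := by positivity
      have hpninv : ((2:ℝ)^n)⁻¹ * (2:ℝ)^n = 1 := inv_mul_cancel₀ hpn.ne'
      have hinv1 : ((2:ℝ)^n)⁻¹ ≤ 1 := by nlinarith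
      rw [hQ] at h4
      calc (((2:ℝ)^n)⁻¹ * δ)^3 * c₀ = (δ^3*c₀) * (((2:ℝ)^n)⁻¹)^3 := by ring
        _ ≤ ((2:ℝ)^n)^2 * (((2:ℝ)^n)⁻¹)^3 := by
            apply mul_le_mul_of_nonneg_right h4 (by positivity)
        _ = ((2:ℝ)^n)⁻¹ := by field_simp
        _ ≤ 1 := hinv1
  obtain ⟨n₀, hn₀⟩ := eventually_atTop.mp hev
  set nn : ℕ → ℕ := fun j => 2 * (n₀ + j) with hnn
  have hnn_ge : ∀ j, n₀ ≤ nn j := fun j => by simp [hnn]; omega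
  have hnn_gej : ∀ j, j ≤ nn j := fun j => by simp [hnn]; omega
  have hnn_gap : ∀ {j j'}, j < j' → nn j + 2 ≤ nn j' := fun {j j'} h => by
    simp [hnn]; omega
  set γ : ℝ := Real.exp (-1) * δ^9 * c₀^2 / (2 * (18 * TT δ r)^3) with hγ
  have hγpos : 0 < γ := by rw [hγ]; positivity
  set q : ℝ≥0∞ := ENNReal.ofReal (Real.exp (-γ)) with hq
  have hq1 : q < 1 := by
    rw [hq, ENNReal.ofReal_lt_one]
    exact Real.exp_lt_one_iff.mpr (by linarith)
  set Eset : ℕ → Set Ω := fun j =>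
    ⋃ a ∈ Box δ r (nn j),
      {ω | N ω (Metric.ball (ctr r (nn j) (mOf δ r a)) (ρ (nn j))) = 2} with hEset
  -- per-ball factor bound
  have hfac : ∀ (n : ℕ), n₀ ≤ n → ∀ (m : Fin 3 → ℤ),
      P {ω | ¬ N ω (Metric.ball (ctr r n m) (ρ n)) = 2}
        ≤ ENNReal.ofReal (Real.exp (-(Real.exp (-1) * ((ρ n)^3 * c₀)^2 / 2))) := by
    intro n hn m
    have hle1 : (volume (Metric.ball (ctr r n m) (ρ n))).toReal ≤ 1 := by
      rw [hlam]; exact (hn₀ n hn).2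
    have := prob_ne_two_le P N hmeas hpoisson (measurableSet_ball) (hvol n m) hle1
    rw [hlam] at this
    refine this.trans (ENNReal.ofReal_le_ofReal ?_)
    apply Real.exp_le_exp.mpr
    have hlamnn : 0 ≤ (ρ n)^3 * c₀ := by positivity
    have hlam1 : (ρ n)^3 * c₀ ≤ 1 := (hn₀ n hn).2
    have hexp : Real.exp (-1) ≤ Real.exp (-((ρ n)^3 * c₀)) :=
      Real.exp_le_exp.mpr (by linarith)
    have hsq : 0 ≤ ((ρ n)^3 * c₀)^2 := sq_nonneg _
    nlinarith
  -- count times rate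
  have hMp : ∀ (n : ℕ), γ ≤ ((WW δ r n + 1 : ℕ) : ℝ)^3 * (Real.exp (-1) * ((ρ n)^3 * c₀)^2 / 2) := by
    intro n
    have hpn : (0:ℝ) < 2^n := by positivity
    have hQ : (2:ℝ)^(2*n) = ((2:ℝ)^n)^2 := by rw [← pow_mul, mul_comm]
    have hWl := WW_lb hδ hr (δ := δ) (r := r) n
    have hWcast : (δ * 2^(2*n) / (18 * TT δ r)) ≤ ((WW δ r n + 1 : ℕ) : ℝ) := by
      push_cast
      have : (0:ℝ) ≤ 1 := zero_le_one
      linarith [hWl]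
    have hcube : (δ * 2^(2*n) / (18 * TT δ r))^3 ≤ ((WW δ r n + 1 : ℕ) : ℝ)^3 :=
      pow_le_pow_left₀ (by positivity) hWcast 3
    have heq : (δ * 2^(2*n) / (18 * TT δ r))^3 * (Real.exp (-1) * ((ρ n)^3 * c₀)^2 / 2) = γ := by
      rw [hρn, hγ, hQ]
      have hTne : TT δ r ≠ 0 := hT.ne'
      field_simp
    calc γ = (δ * 2^(2*n) / (18 * TT δ r))^3 * (Real.exp (-1) * ((ρ n)^3 * c₀)^2 / 2) := heq.symm
      _ ≤ ((WW δ r n + 1 : ℕ) : ℝ)^3 * (Real.exp (-1) * ((ρ n)^3 * c₀)^2 / 2) := by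
          apply mul_le_mul_of_nonneg_right hcube (by positivity)
  -- key independence bound
  have hkey : ∀ (F : Finset ℕ), P (⋂ j ∈ F, (Eset j)ᶜ) ≤ q ^ F.card := by
    intro F
    set A : (Σ j : {j // j ∈ F}, {a // a ∈ Box δ r (nn j.1)}) → Set (EuclideanSpace ℝ (Fin 3)) :=
      fun i => Metric.ball (ctr r (nn i.1.1) (mOf δ r i.2.1)) (ρ (nn i.1.1)) with hA
    have hAm : ∀ i, MeasurableSet (A i) := fun i => measurableSet_ball
    have hdisjA : Pairwise (Function.onFun Disjoint A) := by
      rintro ⟨⟨j, hj⟩, ⟨a, ha⟩⟩ ⟨⟨j', hj'⟩, ⟨b, hb⟩⟩ hne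
      simp only [Function.onFun, hA]
      rcases lt_trichotomy j j' with hlt | heqj | hgt
      · have := disjoint_cross_scale hδ hr (hn₀ _ (hnn_ge j)).1 (hn₀ _ (hnn_ge j')).1
          (hnn_gap hlt) ha hb
        simpa [hρdef] using this
      · subst heqj
        have hab : a ≠ b := by
          intro h; subst h; exact hne rfl
        have := disjoint_same_scale hδ hr (δ := δ) (r := r) (n := nn j) hab
        simpa [hρdef] using this
      · have := disjoint_cross_scale hδ hr (hn₀ _ (hnn_ge j')).1 (hn₀ _ (hnn_ge j)).1
          (hnn_gap hgt) hb ha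
        simpa [hρdef] using this.symm
    have hInd := hindep A hAm hdisjA
    have hprod := hInd.meas_iInter (s := fun i => {ω | ¬ N ω (A i) = 2})
      (fun i => ⟨{2}ᶜ, (measurableSet_singleton 2).compl, rfl⟩)
    have hsets : (⋂ i, {ω | ¬ N ω (A i) = 2}) = ⋂ j ∈ F, (Eset j)ᶜ := by
      ext ω
      simp only [Set.mem_iInter, Set.mem_setOf_eq, Sigma.forall, Subtype.forall,
        hEset, Set.mem_compl_iff, Set.mem_iUnion, not_exists, hA]
    rw [← hsets, hprod]
    -- estimate the product
    have hstep : ∀ (j : {j // j ∈ F}),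
        (∏ a : {a // a ∈ Box δ r (nn j.1)},
          P {ω | ¬ N ω (Metric.ball (ctr r (nn j.1) (mOf δ r a.1)) (ρ (nn j.1))) = 2}) ≤ q := by
      intro j
      have hcard : Fintype.card {a // a ∈ Box δ r (nn j.1)} = (WW δ r (nn j.1) + 1)^3 := by
        rw [Fintype.card_coe, card_Box hδ hr]
      calc (∏ a : {a // a ∈ Box δ r (nn j.1)},
            P {ω | ¬ N ω (Metric.ball (ctr r (nn j.1) (mOf δ r a.1)) (ρ (nn j.1))) = 2})
          ≤ ∏ _a : {a // a ∈ Box δ r (nn j.1)},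
            ENNReal.ofReal (Real.exp (-(Real.exp (-1) * ((ρ (nn j.1))^3 * c₀)^2 / 2))) := by
            apply Finset.prod_le_prod' 
            intro a _
            exact hfac (nn j.1) (hnn_ge j.1) (mOf δ r a.1)
        _ = ENNReal.ofReal (Real.exp (-(Real.exp (-1) * ((ρ (nn j.1))^3 * c₀)^2 / 2)))
              ^ ((WW δ r (nn j.1) + 1)^3) := by
            rw [Finset.prod_const, Finset.card_univ, hcard]
        _ = ENNReal.ofReal (Real.exp (-(Real.exp (-1) * ((ρ (nn j.1))^3 * c₀)^2 / 2))
              ^ ((WW δ r (nn j.1) + 1)^3)) := by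
            rw [ENNReal.ofReal_pow (Real.exp_nonneg _)]
        _ ≤ q := by
            rw [hq]
            apply ENNReal.ofReal_le_ofReal
            rw [← Real.exp_nat_mul]
            apply Real.exp_le_exp.mpr
            have := hMp (nn j.1)
            push_cast
            push_cast at this
            nlinarith [this]
    calc (∏ i : (Σ j : {j // j ∈ F}, {a // a ∈ Box δ r (nn j.1)}), P {ω | ¬ N ω (A i) = 2})
        = ∏ j : {j // j ∈ F}, ∏ a : {a // a ∈ Box δ r (nn j.1)},
            P {ω | ¬ N ω (Metric.ball (ctr r (nn j.1) (mOf δ r a.1)) (ρ (nn j.1))) = 2} := by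
          rw [← Finset.univ_sigma_univ, Finset.prod_sigma]
      _ ≤ ∏ _j : {j // j ∈ F}, q := Finset.prod_le_prod' fun j _ => hstep j
      _ = q ^ F.card := by rw [Finset.prod_const, Finset.card_univ, Fintype.card_coe]
  -- null sets
  have hnull : ∀ J : ℕ, P (⋂ (j : ℕ) (_ : J ≤ j), (Eset j)ᶜ) = 0 := by
    intro J
    have hb : ∀ k : ℕ, P (⋂ (j : ℕ) (_ : J ≤ j), (Eset j)ᶜ) ≤ q ^ k := by
      intro k
      have hsub : (⋂ (j : ℕ) (_ : J ≤ j), (Eset j)ᶜ) ⊆ ⋂ j ∈ Finset.Icc J (J + k), (Eset j)ᶜ := by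
        intro ω hω
        simp only [Set.mem_iInter] at hω ⊢
        intro j hj
        rw [Finset.mem_Icc] at hj
        exact hω j hj.1
      refine le_trans (measure_mono hsub) (le_trans (hkey _) ?_)
      rw [Nat.card_Icc]
      have : J + k + 1 - J = k + 1 := by omega
      rw [this]
      exact pow_le_pow_of_le_one zero_le hq1.le (by omega)
    have htend0 : Tendsto (fun k : ℕ => q ^ k) atTop (nhds 0) :=
      ENNReal.tendsto_pow_atTop_nhds_zero_of_lt_one hq1
    have := ge_of_tendsto' htend0 hb
    exact le_antisymm this zero_le
  have hUnull : P (⋃ J : ℕ, ⋂ (j : ℕ) (_ : J ≤ j), (Eset j)ᶜ) = 0 :=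
    measure_iUnion_null hnull
  rw [ae_iff]
  refine measure_mono_null ?_ hUnull
  intro ω hω
  simp only [Set.mem_setOf_eq] at hω
  push_neg at hω
  obtain ⟨J, hJ⟩ := hω
  refine Set.mem_iUnion.mpr ⟨J, ?_⟩
  simp only [Set.mem_iInter, Set.mem_compl_iff]
  intro j hj
  intro hmem
  rw [hEset] at hmem
  simp only [Set.mem_iUnion, Set.mem_setOf_eq] at hmem
  obtain ⟨a, ha, hNa⟩ := hmem
  have hvalid := valid_of_Box hδ hr (hn₀ _ (hnn_ge j)).1 ha
  have hJle : J ≤ nn j := le_trans hj (hnn_gej j)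
  have := hJ (nn j) hJle (mOf δ r a) hvalid
  simp only [hρdef] at hNa
  exact this hNa
end LowerAE

end PoissonAux

/-- For a Poisson point process `ω` on `ℝ³` with Lebesgue intensity, fixed
`δ, r > 0`, almost surely
`limsup_{n→∞} max_{z ∈ 2rℤ³ ∩ B(0, δ2^{2n} - r)} ω(B(2^{-n}z, 2^{-n}δ)) = 2`. -/
theorem poisson_lattice_maximum_limsup
    {Ω : Type*} [MeasurableSpace Ω] (P : Measure Ω) [IsProbabilityMeasure P]
    (N : Ω → Set (EuclideanSpace ℝ (Fin 3)) → ℕ)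
    (hmeas : ∀ A : Set (EuclideanSpace ℝ (Fin 3)), MeasurableSet A →
      Measurable fun ω => N ω A)
    (hpoisson : ∀ A : Set (EuclideanSpace ℝ (Fin 3)), MeasurableSet A →
      volume A < ⊤ → ∀ k : ℕ,
      P {ω | N ω A = k} =
        ENNReal.ofReal (Real.exp (-(volume A).toReal) *
          (volume A).toReal ^ k / (Nat.factorial k)))
    (hindep : ∀ {ι : Type} [Fintype ι]
      (A : ι → Set (EuclideanSpace ℝ (Fin 3))),
      (∀ i, MeasurableSet (A i)) → Pairwise (Function.onFun Disjoint A) →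
      iIndepFun (fun i ω => N ω (A i)) P)
    (δ r : ℝ) (hδ : 0 < δ) (hr : 0 < r) :
    ∀ᵐ ω ∂P, Filter.limsup (fun n : ℕ => maxLatticeCount N r δ n ω) atTop = 2 := by
  have hge3 : ∀ {A : Set (EuclideanSpace ℝ (Fin 3))}, MeasurableSet A → volume A < ⊤ →
      P {ω | 3 ≤ N ω A} ≤ ENNReal.ofReal ((volume A).toReal ^ 3 / 6) :=
    fun hA hv => PoissonAux.prob_ge_three P N hmeas hpoisson hA hv
  have hup := PoissonAux.upper_ae P N δ r hδ hr hge3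
  have hlow := PoissonAux.lower_ae P N hmeas hpoisson hindep hδ hr
  filter_upwards [hup, hlow] with ω hupω hlowω
  have hub : ∀ᶠ n in atTop, maxLatticeCount N r δ n ω ≤ 2 := by
    filter_upwards [hupω] with n hn
    apply PoissonAux.sSup_le_two
    intro m hm
    exact hn m (PoissonAux.mem_bigBox_of_valid hr hm)
  have hlb : ∀ J : ℕ, ∃ n, J ≤ n ∧ 2 ≤ maxLatticeCount N r δ n ω := by
    intro J
    obtain ⟨n, hJn, m, hvalid, h2⟩ := hlowω J
    exact ⟨n, hJn, PoissonAux.two_le_sSup hr hvalid h2⟩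
  rw [Filter.limsup_eq]
  apply le_antisymm
  · apply Nat.sInf_le
    simpa using hub
  · apply le_csInf
    · exact ⟨2, by simpa using hub⟩
    · intro b hb
      simp only [Set.mem_setOf_eq] at hb
      by_contra hcon
      push_neg at hcon
      have hb1 : b ≤ 1 := by omega
      obtain ⟨N₀, hN₀⟩ := eventually_atTop.mp hb
      obtain ⟨n, hn, h2⟩ := hlb N₀
      have := hN₀ n hn
      omega
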